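/- Let H be a finite-dimensional vector space over a field of characteristic zero, N a nilpotent endomorphism with N^{m+1}=0, and W the monodromy weight filtration of N centered at m. Let K = ker N and set Gr^W_k K = (W_k ∩ K)/(W_{k-1} ∩ K). If the induced map N : Gr^W_i H → Gr^W_{i-2} H has kernel as below and i ≤ m, then Gr^W_i K equals the kernel of the induced map N : Gr^W_i H → Gr^W_{i-2} H. -/
import Mathlib


/-- The monodromy weight filtration of `N` centered at `m` (see paper, Prop. on
weight filtrations): increasing, `⊥` below `0`, `⊤` from `2m` on, `N (W l) ⊆ W (l-2)`,
and `N^l` induces isomorphisms `Gr_{m+l} → Gr_{m-l}` for all `l ≥ 0`. -/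
def IsMonodromyWeightFiltration {K H : Type*} [Field K] [AddCommGroup H] [Module K H]
    (m : ℕ) (N : H →ₗ[K] H) (W : ℤ → Submodule K H) : Prop :=
  Monotone W ∧
  (∀ l : ℤ, l < 0 → W l = ⊥) ∧
  (∀ l : ℤ, 2 * (m : ℤ) ≤ l → W l = ⊤) ∧
  (∀ l : ℤ, (W l).map N ≤ W (l - 2)) ∧
  (∀ l : ℕ,
    (∀ x ∈ W ((m : ℤ) + l), (N ^ l) x ∈ W ((m : ℤ) - l)) ∧
    (∀ x ∈ W ((m : ℤ) + l), (N ^ l) x ∈ W ((m : ℤ) - l - 1) → x ∈ W ((m : ℤ) + l - 1)) ∧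
    (∀ y ∈ W ((m : ℤ) - l), ∃ x ∈ W ((m : ℤ) + l), y - (N ^ l) x ∈ W ((m : ℤ) - l - 1)))

section aux
variable {K H : Type*} [Field K] [AddCommGroup H] [Module K H]
  {m : ℕ} {N : H →ₗ[K] H} {W : ℤ → Submodule K H}

lemma mwf_pow_mem (hW : IsMonodromyWeightFiltration m N W) (j : ℕ) :
    ∀ a : ℤ, ∀ x ∈ W a, (N ^ j) x ∈ W (a - 2 * j) := by
  induction j with
  | zero => intro a x hx; simpa using hx
  | succ j ih =>
    intro a x hx
    have h1 : (N ^ (j + 1)) x = N ((N ^ j) x) := by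
      rw [pow_succ']; rfl
    have h2 := hW.2.2.2.1 (a - 2 * j) (Submodule.mem_map_of_mem (ih a x hx))
    rw [h1]
    convert h2 using 2
    push_cast; ring

/-- Downward induction: kill `N^(l+1) x` exactly, modulo `W (m+l-1)`. -/
lemma mwf_key (hW : IsMonodromyWeightFiltration m N W) (j : ℕ) :
    ∀ (l : ℕ) (c : ℤ), c < j → c ≤ (m : ℤ) - l - 3 →
      ∀ x ∈ W ((m : ℤ) + l), (N ^ (l + 1)) x ∈ W c →
        ∃ x', x' ∈ W ((m : ℤ) + l) ∧ (N ^ (l + 1)) x' = 0 ∧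
          x - x' ∈ W ((m : ℤ) + l - 1) := by
  induction j with
  | zero =>
    intro l c hc _ x hx hNx
    refine ⟨x, hx, ?_, by simpa using (W ((m:ℤ)+l-1)).zero_mem⟩
    have : W c = ⊥ := hW.2.1 c (by exact_mod_cast hc)
    rw [this] at hNx
    simpa using hNx
  | succ j ih =>
    intro l c hc hcle x hx hNx
    by_cases hc0 : c < 0
    · refine ⟨x, hx, ?_, by simpa using (W ((m:ℤ)+l-1)).zero_mem⟩
      have : W c = ⊥ := hW.2.1 c hc0
      rw [this] at hNx
      simpa using hNx
    · push_neg at hc0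
      set k : ℕ := ((m : ℤ) - c).toNat with hkdef
      have hkz : (k : ℤ) = (m : ℤ) - c := by
        rw [hkdef, Int.toNat_of_nonneg]; omega
      have hkl : (l : ℤ) + 3 ≤ (k : ℤ) := by omega
      -- surjectivity at level k
      obtain ⟨z, hz, hzd⟩ := (hW.2.2.2.2 k).2.2 ((N ^ (l+1)) x)
        (by rw [show (m:ℤ) - k = c by omega]; exact hNx)
      have hkl1 : l + 1 ≤ k := by omega
      set x' : H := x - (N ^ (k - (l+1))) z with hx'def
      have hpow : (N ^ (l+1)) ((N ^ (k - (l+1))) z) = (N ^ k) z := by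
        have : N ^ (l+1) * N ^ (k - (l+1)) = N ^ k := by
          rw [← pow_add]; congr 1; omega
        calc (N ^ (l+1)) ((N ^ (k - (l+1))) z) = (N ^ (l+1) * N ^ (k - (l+1))) z := rfl
        _ = (N ^ k) z := by rw [this]
      have hzmem : (N ^ (k - (l+1))) z ∈ W ((m : ℤ) + l - 1) := by
        have := mwf_pow_mem hW (k - (l+1)) ((m:ℤ) + k) z hz
        refine hW.1 ?_ this
        have : ((k - (l+1) : ℕ) : ℤ) = (k : ℤ) - (l+1) := by
          push_cast [Nat.cast_sub hkl1]; ring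
        omega
      have hx'mem : x' ∈ W ((m : ℤ) + l) := by
        refine Submodule.sub_mem _ hx (hW.1 ?_ hzmem); omega
      have hx'N : (N ^ (l+1)) x' ∈ W (c - 1) := by
        rw [hx'def, map_sub, hpow]
        have : (m : ℤ) - k - 1 = c - 1 := by omega
        rw [← this]; exact hzd
      obtain ⟨x'', hx''mem, hx''N, hx''d⟩ :=
        ih l (c - 1) (by omega) (by omega) x' hx'mem hx'N
      refine ⟨x'', hx''mem, hx''N, ?_⟩
      have : x - x'' = (x - x') + (x' - x'') := by abel
      rw [this]
      exact Submodule.add_mem _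
        (by rw [hx'def]; simpa using hzmem) hx''d

end aux

/-- For `i ≤ m`, the subquotient `Gr^W_i K = (W_i ∩ ker N)/(W_{i-1} ∩ ker N)`
coincides with the kernel of the map `Gr^W_i H → Gr^W_{i-2} H` induced by `N`.
Stated on representatives: a class `[v] ∈ Gr^W_i H` (with `v ∈ W_i`) is killed by
the induced map (i.e. `N v ∈ W_{i-3}`) iff it is represented by an element of
`W_i ∩ ker N` (i.e. `∃ u ∈ W_i` with `N u = 0` and `v - u ∈ W_{i-1}`). -/
theorem stmt_1 {K H : Type*} [Field K] [CharZero K] [AddCommGroup H] [Module K H]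
    [FiniteDimensional K H] (m : ℕ) (N : H →ₗ[K] H) (hN : N ^ (m + 1) = 0)
    (W : ℤ → Submodule K H) (hW : IsMonodromyWeightFiltration m N W) :
    ∀ i : ℤ, i ≤ (m : ℤ) → ∀ v ∈ W i,
      (N v ∈ W (i - 3) ↔ ∃ u, u ∈ W i ∧ N u = 0 ∧ v - u ∈ W (i - 1)) := by
  intro i hi v hv
  constructor
  · intro hNv
    by_cases hi0 : i < 0
    · have hbot : W i = ⊥ := hW.2.1 i hi0
      rw [hbot] at hv
      refine ⟨0, (W i).zero_mem, map_zero N, ?_⟩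
      simp only [Submodule.mem_bot] at hv
      simp [hv]
    · push_neg at hi0
      set l : ℕ := ((m : ℤ) - i).toNat with hldef
      have hlz : (l : ℤ) = (m : ℤ) - i := by
        rw [hldef, Int.toNat_of_nonneg]; omega
      obtain ⟨x, hx, hvx⟩ := (hW.2.2.2.2 l).2.2 v (by rw [show (m:ℤ) - l = i by omega]; exact hv)
      have hvx' : v - (N ^ l) x ∈ W (i - 1) := by
        rwa [show (m:ℤ) - l - 1 = i - 1 by omega] at hvx
      have hNx : (N ^ (l + 1)) x ∈ W (i - 3) := by
        have h1 : (N ^ (l + 1)) x = N v - N (v - (N ^ l) x) := by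
          rw [map_sub, pow_succ']
          simp
        rw [h1]
        refine Submodule.sub_mem _ hNv ?_
        have := hW.2.2.2.1 (i - 1) (Submodule.mem_map_of_mem hvx')
        rwa [show i - 1 - 2 = i - 3 by ring] at this
      obtain ⟨x', hx'mem, hx'N, hx'd⟩ := mwf_key hW (i - 2).toNat l (i - 3)
        (by omega) (by omega) x hx hNx
      refine ⟨(N ^ l) x', ?_, ?_, ?_⟩
      · have := mwf_pow_mem hW l ((m:ℤ) + l) x' hx'mem
        rwa [show (m:ℤ) + l - 2 * l = i by omega] at this
      · have : N ((N ^ l) x') = (N ^ (l + 1)) x' := by rw [pow_succ']; rfl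
        rw [this, hx'N]
      · have h2 : v - (N ^ l) x' = (v - (N ^ l) x) + (N ^ l) (x - x') := by
          rw [map_sub]; abel
        rw [h2]
        refine Submodule.add_mem _ hvx' ?_
        have := mwf_pow_mem hW l ((m:ℤ) + l - 1) (x - x') hx'd
        rwa [show (m:ℤ) + l - 1 - 2 * l = i - 1 by omega] at this
  · rintro ⟨u, hu, hNu, hvu⟩
    have h1 : N v = N (v - u) := by rw [map_sub, hNu, sub_zero]
    rw [h1]
    have := hW.2.2.2.1 (i - 1) (Submodule.mem_map_of_mem hvu)
    rwa [show i - 1 - 2 = i - 3 by ring] at this
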